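/- Let k ≥ 2 and let G be a k-dicritical digraph. Then every arc of G is contained in an induced directed cycle of G (a directed cycle with pairwise distinct vertices such that the subdigraph induced by its vertex set contains no arcs other than those of the cycle). -/

import Mathlib

/-- A (simple) digraph: a finite vertex set (of naturals) together with a finite
set of arcs between distinct vertices. -/
structure FDigraph where
  verts : Finset ℕ
  arcs : Finset (ℕ × ℕ)
  wf : ∀ a ∈ arcs, a.1 ∈ verts ∧ a.2 ∈ verts ∧ a.1 ≠ a.2

namespace FDigraph

/-- Smart constructor: keeps only the legal arcs. -/
def mk' (V : Finset ℕ) (A : Finset (ℕ × ℕ)) : FDigraph where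
  verts := V
  arcs := A.filter fun a => a.1 ∈ V ∧ a.2 ∈ V ∧ a.1 ≠ a.2
  wf := by
    intro a ha
    simp only [Finset.mem_filter] at ha
    exact ha.2

/-- A directed cycle, given as its (nonempty, duplicate-free) list of vertices:
every cyclically consecutive pair is an arc. -/
def IsDicycle (G : FDigraph) (l : List ℕ) : Prop :=
  l ≠ [] ∧ l.Nodup ∧ ∀ p ∈ l.zip (l.rotate 1), p ∈ G.arcs

/-- A set of vertices is acyclic if it contains no directed cycle. -/
def AcyclicOn (G : FDigraph) (S : Set ℕ) : Prop :=
  ¬ ∃ l, G.IsDicycle l ∧ ∀ v ∈ l, v ∈ S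

/-- A `k`-dicolouring: colours `0, …, k-1`, every colour class acyclic. -/
def IsDicolouring (G : FDigraph) (k : ℕ) (φ : ℕ → ℕ) : Prop :=
  (∀ v ∈ G.verts, φ v < k) ∧ ∀ c, G.AcyclicOn {v | φ v = c}

/-- The dichromatic number. -/
noncomputable def dichi (G : FDigraph) : ℕ := sInf {k | ∃ φ, G.IsDicolouring k φ}

/-- Subdigraph relation. -/
def Subdigraph (H G : FDigraph) : Prop := H.verts ⊆ G.verts ∧ H.arcs ⊆ G.arcs

/-- `G` is `k`-dicritical. -/
def Dicritical (G : FDigraph) (k : ℕ) : Prop :=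
  G.dichi = k ∧ ∀ H, Subdigraph H G → H ≠ G → H.dichi ≤ k - 1

/-- Induced subdigraph on a finite set of vertices. -/
def induce (G : FDigraph) (S : Finset ℕ) : FDigraph := mk' (G.verts ∩ S) G.arcs

def outDeg (G : FDigraph) (v : ℕ) : ℕ := (G.arcs.filter fun a => a.1 = v).card
def inDeg (G : FDigraph) (v : ℕ) : ℕ := (G.arcs.filter fun a => a.2 = v).card
def deg (G : FDigraph) (v : ℕ) : ℕ := G.outDeg v + G.inDeg v

/-- Weak adjacency: an arc in either direction. -/
def wadj (G : FDigraph) (u v : ℕ) : Prop := (u, v) ∈ G.arcs ∨ (v, u) ∈ G.arcs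

/-- Weak reachability. -/
def WReach (G : FDigraph) : ℕ → ℕ → Prop := Relation.ReflTransGen G.wadj

/-- A digraph is connected when its underlying graph is connected
(the empty digraph counts as connected). -/
def Connected (G : FDigraph) : Prop := ∀ u ∈ G.verts, ∀ v ∈ G.verts, G.WReach u v

/-- The set of connected components. -/
def components (G : FDigraph) : Set (Set ℕ) :=
  {C | ∃ v ∈ G.verts, C = {u | u ∈ G.verts ∧ G.WReach v u}}

/-- The number of connected components. -/
noncomputable def numComponents (G : FDigraph) : ℕ := G.components.ncard

/-- Isomorphism of digraphs. -/
def Iso (G H : FDigraph) : Prop :=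
  ∃ f : ℕ → ℕ, Set.BijOn f ↑G.verts ↑H.verts ∧
    ∀ u ∈ G.verts, ∀ v ∈ G.verts, ((u, v) ∈ G.arcs ↔ (f u, f v) ∈ H.arcs)

/-- The bidirected (complete) digraph `↔K_n`. -/
def completeD (n : ℕ) : FDigraph := mk' (Finset.range n) (Finset.range n ×ˢ Finset.range n)

/-- The directed cycle `C⃗_n`. -/
def dirCycle (n : ℕ) : FDigraph :=
  mk' (Finset.range n)
    ((Finset.range n ×ˢ Finset.range n).filter fun a => a.2 = (a.1 + 1) % n)

/-- The bidirected cycle `↔C_n`. -/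
def biCycle (n : ℕ) : FDigraph :=
  mk' (Finset.range n)
    ((Finset.range n ×ˢ Finset.range n).filter fun a =>
      a.2 = (a.1 + 1) % n ∨ a.1 = (a.2 + 1) % n)

/-- The Dirac join of `↔K_{k-2}` (on `{0,…,k-3}`) and the directed triangle
`C⃗_3` (on `{k-2, k-1, k}`). -/
def diracJoinExample (k : ℕ) : FDigraph :=
  mk' (Finset.range (k + 1))
    ((Finset.range (k + 1) ×ˢ Finset.range (k + 1)).filter fun a =>
      a.1 < k - 2 ∨ a.2 < k - 2 ∨ a.2 = (if a.1 = k then k - 2 else a.1 + 1))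

end FDigraph


lemma mem_zip_iff (l : List ℕ) (p : ℕ × ℕ) :
    p ∈ l.zip (l.rotate 1) ↔
      ∃ i : ℕ, ∃ h : i < l.length,
        p = (l[i], l[(i+1) % l.length]'(Nat.mod_lt _ (by omega))) := by
  rw [List.mem_iff_getElem]
  constructor
  · rintro ⟨i, hi, rfl⟩
    rw [List.length_zip, List.length_rotate] at hi
    have hi' : i < l.length := by omega
    refine ⟨i, hi', ?_⟩
    rw [List.getElem_zip, List.getElem_rotate]
  · rintro ⟨i, hi, rfl⟩
    have hz : i < (l.zip (l.rotate 1)).length := by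
      rw [List.length_zip, List.length_rotate]; omega
    refine ⟨i, hz, ?_⟩
    rw [List.getElem_zip, List.getElem_rotate]

lemma getElem_idx_congr {l : List ℕ} {i j : ℕ} (h : i = j) (hi : i < l.length) :
    l[i]'hi = l[j]'(h ▸ hi) := by subst h; rfl

lemma rot_key (n m t : ℕ) (hn : 0 < n) : (t + (n - m % n) + m) % n = t % n := by
  have h2 : n * (m / n) + m % n = m := Nat.div_add_mod m n
  have h1 : m % n < n := Nat.mod_lt _ hn
  have h3 : t + (n - m % n) + m = t + n * (m / n + 1) := by
    rw [Nat.mul_add, Nat.mul_one]; omega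
  rw [h3, Nat.add_mul_mod_self_left]

lemma zip_rotate_subset (l : List ℕ) (m : ℕ) (p : ℕ × ℕ)
    (hp : p ∈ l.zip (l.rotate 1)) :
    p ∈ (l.rotate m).zip ((l.rotate m).rotate 1) := by
  rcases List.eq_nil_or_concat l with rfl | -
  · simp at hp
  rw [mem_zip_iff] at hp ⊢
  obtain ⟨i, hi, rfl⟩ := hp
  have hn0 : 0 < l.length := by omega
  have hlr : (l.rotate m).length = l.length := List.length_rotate l m
  refine ⟨(i + (l.length - m % l.length)) % l.length,
    by rw [hlr]; exact Nat.mod_lt _ hn0, ?_⟩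
  have e1 : ((i + (l.length - m % l.length)) % l.length + m) % l.length = i := by
    rw [Nat.mod_add_mod, rot_key l.length m i hn0, Nat.mod_eq_of_lt hi]
  have e2 : (((i + (l.length - m % l.length)) % l.length + 1) % l.length + m)
      % l.length = (i + 1) % l.length := by
    rw [Nat.mod_add_mod]
    have a1 : (i + (l.length - m % l.length)) % l.length + 1 + m
        = (i + (l.length - m % l.length)) % l.length + (1 + m) := by omega
    rw [a1, Nat.mod_add_mod]
    have a2 : i + (l.length - m % l.length) + (1 + m)
        = (i + 1) + (l.length - m % l.length) + m := by omega
    rw [a2, rot_key l.length m (i+1) hn0]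
  ext
  · simp only [List.getElem_rotate]
    exact (getElem_idx_congr e1 _).symm
  · simp only [List.getElem_rotate, hlr]
    exact (getElem_idx_congr e2 _).symm

lemma mem_zip_rotate_iff (l : List ℕ) (m : ℕ) (p : ℕ × ℕ) :
    p ∈ (l.rotate m).zip ((l.rotate m).rotate 1) ↔ p ∈ l.zip (l.rotate 1) := by
  refine ⟨fun h => ?_, zip_rotate_subset l m p⟩
  rcases List.eq_nil_or_concat l with rfl | -
  · simp only [List.rotate_nil] at h; exact h
  have hn0 : 0 < l.length := by
    cases l with
    | nil => simp_all
    | cons a t => simp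
  have h2 := zip_rotate_subset (l.rotate m) (l.length - m % l.length) p h
  rw [List.rotate_rotate] at h2
  have e0 : (m + (l.length - m % l.length)) % l.length = 0 := by
    have := rot_key l.length m 0 hn0
    have e : m + (l.length - m % l.length) = 0 + (l.length - m % l.length) + m := by omega
    rw [e]
    simpa using this
  rw [← List.rotate_mod, e0, List.rotate_zero] at h2
  exact h2

namespace FDigraph

lemma IsDicycle.length_pos {G : FDigraph} {l : List ℕ} (h : G.IsDicycle l) :
    0 < l.length := List.length_pos_iff.2 h.1

lemma IsDicycle.arc_get {G : FDigraph} {l : List ℕ} (h : G.IsDicycle l) {i : ℕ}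
    (hi : i < l.length) :
    (l[i], l[(i+1) % l.length]'(Nat.mod_lt _ (by omega))) ∈ G.arcs :=
  h.2.2 _ ((mem_zip_iff l _).2 ⟨i, hi, rfl⟩)

lemma IsDicycle.rotate {G : FDigraph} {l : List ℕ} (h : G.IsDicycle l) (m : ℕ) :
    G.IsDicycle (l.rotate m) := by
  refine ⟨?_, List.nodup_rotate.2 h.2.1, fun p hp => h.2.2 p ((mem_zip_rotate_iff l m p).1 hp)⟩
  intro hc
  exact h.1 (List.rotate_eq_nil_iff.1 hc)

lemma exists_dicolouring (G : FDigraph) : ∃ m φ, G.IsDicolouring m φ := by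
  refine ⟨(G.verts.sup id) + 1, id, fun v hv => ?_, fun c => ?_⟩
  · exact Nat.lt_succ_of_le (Finset.le_sup (f := id) hv)
  · rintro ⟨l, ⟨hne, hnd, harc⟩, hall⟩
    match l with
    | [] => exact hne rfl
    | [x] =>
        have : (x, x) ∈ G.arcs := harc (x, x) (by simp)
        exact (G.wf _ this).2.2 rfl
    | x :: y :: t =>
        have hx : x = c := hall x (by simp)
        have hy : y = c := hall y (by simp)
        have : x ∉ y :: t := (List.nodup_cons.1 hnd).1
        exact this (by simp [hx, hy])

lemma IsDicolouring.mono {G : FDigraph} {m m' : ℕ} {φ : ℕ → ℕ}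
    (h : G.IsDicolouring m φ) (hm : m ≤ m') : G.IsDicolouring m' φ :=
  ⟨fun v hv => lt_of_lt_of_le (h.1 v hv) hm, h.2⟩

lemma exists_dicolouring_dichi (G : FDigraph) : ∃ φ, G.IsDicolouring G.dichi φ := by
  have hne : {k | ∃ φ, G.IsDicolouring k φ}.Nonempty := by
    obtain ⟨m, φ, h⟩ := G.exists_dicolouring
    exact ⟨m, φ, h⟩
  exact Nat.sInf_mem hne

end FDigraph

namespace FDigraph

lemma shortcut {G : FDigraph} {l : List ℕ} (hcyc : G.IsDicycle l) {i j : ℕ}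
    (hi : i < l.length) (hij : i + 2 ≤ j) (hj : j < l.length)
    (chord : ((l[i]'hi, l[j]'hj)) ∈ G.arcs) :
    ∃ l' : List ℕ, G.IsDicycle l' ∧ l'.length < l.length ∧ (∀ v ∈ l', v ∈ l) ∧
      ((l[l.length - 1]'(by omega), l[0]'(by omega))) ∈ l'.zip (l'.rotate 1) := by
  have hlen : (l.take (i+1) ++ l.drop j).length = (i+1) + (l.length - j) := by
    rw [List.length_append, List.length_take, List.length_drop]
    omega
  have hg1 : ∀ t (ht : t < i+1),
      (l.take (i+1) ++ l.drop j)[t]'(by omega) = l[t]'(by omega) := by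
    intro t ht
    rw [List.getElem_append_left (by rw [List.length_take]; omega)]
    exact List.getElem_take
  have hg2 : ∀ t (h1 : i+1 ≤ t) (ht : t < (i+1) + (l.length - j)),
      (l.take (i+1) ++ l.drop j)[t]'(by omega) = l[j + (t - (i+1))]'(by omega) := by
    intro t h1 ht
    rw [List.getElem_append_right (by rw [List.length_take]; omega)]
    rw [List.getElem_drop]
    exact getElem_idx_congr (by rw [List.length_take]; omega) _
  have hwrap : ∀ h : (i + (l.length - j)) < (l.take (i+1) ++ l.drop j).length,
      ((l.take (i+1) ++ l.drop j)[i + (l.length - j)]'h,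
       (l.take (i+1) ++ l.drop j)[(i + (l.length - j) + 1) % (l.take (i+1) ++ l.drop j).length]'(Nat.mod_lt _ (by omega)))
        = (l[l.length - 1]'(by omega), l[0]'(by omega)) := by
    intro h
    have e0 : (i + (l.length - j) + 1) % (l.take (i+1) ++ l.drop j).length = 0 := by
      rw [hlen, show i + (l.length - j) + 1 = (i+1) + (l.length - j) from by omega,
        Nat.mod_self]
    ext
    · simp only
      rw [hg2 (i + (l.length - j)) (by omega) (by omega)]
      exact getElem_idx_congr (by omega) _
    · simp only
      rw [getElem_idx_congr e0, hg1 0 (by omega)]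
  have harcs : ∀ p ∈ (l.take (i+1) ++ l.drop j).zip ((l.take (i+1) ++ l.drop j).rotate 1),
      p ∈ G.arcs := by
    intro p hp
    rw [mem_zip_iff] at hp
    obtain ⟨t, ht, rfl⟩ := hp
    have ht' : t < (i+1) + (l.length - j) := by omega
    by_cases hA : t < i
    · have e2 : (t+1) % (l.take (i+1) ++ l.drop j).length = t + 1 :=
        Nat.mod_eq_of_lt (by omega)
      have e3 : (t+1) % l.length = t + 1 := Nat.mod_eq_of_lt (by omega)
      have heq : ((l.take (i+1) ++ l.drop j)[t]'ht,
          (l.take (i+1) ++ l.drop j)[(t+1) % (l.take (i+1) ++ l.drop j).length]'(Nat.mod_lt _ (by omega)))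
          = (l[t]'(by omega), l[(t+1) % l.length]'(Nat.mod_lt _ (by omega))) := by
        ext
        · simp only; rw [hg1 t (by omega)]
        · simp only
          rw [getElem_idx_congr e2, hg1 (t+1) (by omega)]
          exact (getElem_idx_congr e3 _).symm
      rw [heq]
      exact hcyc.arc_get (by omega)
    by_cases hB : t = i
    · have e2 : (t+1) % (l.take (i+1) ++ l.drop j).length = t + 1 :=
        Nat.mod_eq_of_lt (by omega)
      have heq : ((l.take (i+1) ++ l.drop j)[t]'ht,
          (l.take (i+1) ++ l.drop j)[(t+1) % (l.take (i+1) ++ l.drop j).length]'(Nat.mod_lt _ (by omega)))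
          = (l[i]'(by omega), l[j]'(by omega)) := by
        ext
        · simp only; rw [hg1 t (by omega)]; exact getElem_idx_congr hB _
        · simp only
          rw [getElem_idx_congr e2, hg2 (t+1) (by omega) (by omega)]
          exact getElem_idx_congr (by omega) _
      rw [heq]
      exact chord
    by_cases hD : t = i + (l.length - j)
    · subst hD
      rw [hwrap ht]
      have h2 := hcyc.arc_get (i := l.length - 1) (by omega)
      have e : (l.length - 1 + 1) % l.length = 0 := by
        rw [show l.length - 1 + 1 = l.length from by omega, Nat.mod_self]
      have heq : (l[(l.length - 1 + 1) % l.length]'(Nat.mod_lt _ (by omega)))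
          = l[0]'(by omega) := getElem_idx_congr e _
      rw [heq] at h2
      exact h2
    · have hC1 : i + 1 ≤ t := by omega
      have hC2 : t + 1 < (i+1) + (l.length - j) := by omega
      have e2 : (t+1) % (l.take (i+1) ++ l.drop j).length = t + 1 :=
        Nat.mod_eq_of_lt (by omega)
      have hs : j + (t - (i+1)) + 1 < l.length := by omega
      have heq : ((l.take (i+1) ++ l.drop j)[t]'ht,
          (l.take (i+1) ++ l.drop j)[(t+1) % (l.take (i+1) ++ l.drop j).length]'(Nat.mod_lt _ (by omega)))
          = (l[j + (t - (i+1))]'(by omega),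
             l[(j + (t - (i+1)) + 1) % l.length]'(Nat.mod_lt _ (by omega))) := by
        ext
        · simp only; rw [hg2 t hC1 (by omega)]
        · simp only
          rw [getElem_idx_congr e2, hg2 (t+1) (by omega) (by omega)]
          refine (getElem_idx_congr ?_ _).symm
          rw [Nat.mod_eq_of_lt hs]
          omega
      rw [heq]
      exact hcyc.arc_get (by omega)
  have hdrop : (l.drop j).Sublist (l.drop (i+1)) := by
    have h1 : (l.drop (i+1)).drop (j - (i+1)) = l.drop j := by
      rw [List.drop_drop]; congr 1; omega
    rw [← h1]
    exact List.drop_sublist _ _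
  have hsub : (l.take (i+1) ++ l.drop j).Sublist l := by
    have := List.Sublist.append (List.Sublist.refl (l.take (i+1))) hdrop
    rwa [List.take_append_drop] at this
  refine ⟨l.take (i+1) ++ l.drop j,
    ⟨?_, hcyc.2.1.sublist hsub, harcs⟩, by omega, fun v hv => hsub.subset hv, ?_⟩
  · exact List.length_pos_iff.1 (by omega)
  · rw [mem_zip_iff]
    exact ⟨i + (l.length - j), by omega, (hwrap (by omega)).symm⟩

end FDigraph

namespace FDigraph

lemma avoid {G : FDigraph} {l : List ℕ} (hcyc : G.IsDicycle l) {i j : ℕ}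
    (hji : j < i) (hi : i < l.length)
    (chord : ((l[i]'hi, l[j]'(by omega))) ∈ G.arcs)
    (hcorner : ¬ (i = l.length - 1 ∧ j = 0)) :
    ∃ l' : List ℕ, l' ≠ [] ∧ l'.Nodup ∧ (∀ v ∈ l', v ∈ l) ∧
      ∀ p ∈ l'.zip (l'.rotate 1), p ∈ G.arcs ∧
        p ≠ (l[l.length - 1]'(by omega), l[0]'(by omega)) := by
  have hlen : ((l.drop j).take (i+1-j)).length = i+1-j := by
    rw [List.length_take, List.length_drop]
    omega
  have hg : ∀ t (ht : t < i+1-j),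
      ((l.drop j).take (i+1-j))[t]'(by omega) = l[j + t]'(by omega) := by
    intro t ht
    rw [List.getElem_take, List.getElem_drop]
  have hsub : ((l.drop j).take (i+1-j)).Sublist l :=
    ((l.drop j).take_sublist (i+1-j)).trans (l.drop_sublist j)
  refine ⟨(l.drop j).take (i+1-j), List.length_pos_iff.1 (by omega),
    hcyc.2.1.sublist hsub, fun v hv => hsub.subset hv, ?_⟩
  intro p hp
  rw [mem_zip_iff] at hp
  obtain ⟨t, ht, rfl⟩ := hp
  have ht' : t < i+1-j := by omega
  by_cases hE : t + 1 < i+1-j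
  · have e2 : (t+1) % ((l.drop j).take (i+1-j)).length = t + 1 :=
      Nat.mod_eq_of_lt (by omega)
    have e3 : (j+t+1) % l.length = j+t+1 := Nat.mod_eq_of_lt (by omega)
    have heq : (((l.drop j).take (i+1-j))[t]'ht,
        ((l.drop j).take (i+1-j))[(t+1) % ((l.drop j).take (i+1-j)).length]'(Nat.mod_lt _ (by omega)))
        = (l[j+t]'(by omega), l[(j+t+1) % l.length]'(Nat.mod_lt _ (by omega))) := by
      ext
      · simp only; rw [hg t (by omega)]
      · simp only
        rw [getElem_idx_congr e2, hg (t+1) (by omega)]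
        refine (getElem_idx_congr ?_ _).symm
        rw [e3]; omega
    rw [heq]
    refine ⟨hcyc.arc_get (by omega), fun hcon => ?_⟩
    have h1 : l[j+t]'(by omega) = l[l.length - 1]'(by omega) := by
      have := congrArg Prod.fst hcon
      simpa using this
    have := (hcyc.2.1.getElem_inj_iff).1 h1
    omega
  · -- t = i - j, wrap arc of l' : the chord
    have hT : t = i - j := by omega
    have e2 : (t+1) % ((l.drop j).take (i+1-j)).length = 0 := by
      rw [hlen, show t + 1 = i+1-j from by omega, Nat.mod_self]
    have heq : (((l.drop j).take (i+1-j))[t]'ht,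
        ((l.drop j).take (i+1-j))[(t+1) % ((l.drop j).take (i+1-j)).length]'(Nat.mod_lt _ (by omega)))
        = (l[i]'(by omega), l[j]'(by omega)) := by
      ext
      · simp only; rw [hg t (by omega)]
        exact getElem_idx_congr (by omega) _
      · simp only
        rw [getElem_idx_congr e2, hg 0 (by omega)]
        exact getElem_idx_congr (by omega) _
    rw [heq]
    refine ⟨chord, fun hcon => ?_⟩
    have h1 : l[i]'(by omega) = l[l.length - 1]'(by omega) := by
      have := congrArg Prod.fst hcon; simpa using this
    have h2 : l[j]'(by omega) = l[0]'(by omega) := by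
      have := congrArg Prod.snd hcon; simpa using this
    have e1 := (hcyc.2.1.getElem_inj_iff).1 h1
    have e2' := (hcyc.2.1.getElem_inj_iff).1 h2
    exact hcorner ⟨e1, e2'⟩

end FDigraph
/-- every arc of a `k`-dicritical digraph lies on an induced
directed cycle. -/
theorem arc_in_induced_cycle (k : ℕ) (hk : 2 ≤ k) (G : FDigraph)
    (hG : G.Dicritical k) :
    ∀ a ∈ G.arcs, ∃ l : List ℕ, G.IsDicycle l ∧ a ∈ l.zip (l.rotate 1) ∧
      ∀ u ∈ l, ∀ v ∈ l, (u, v) ∈ G.arcs → (u, v) ∈ l.zip (l.rotate 1) := by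
  intro a ha
  let H : FDigraph := ⟨G.verts, G.arcs.erase a,
    fun b hb => G.wf b (Finset.mem_of_mem_erase hb)⟩
  have hsub : FDigraph.Subdigraph H G := ⟨subset_rfl, Finset.erase_subset _ _⟩
  have hne : H ≠ G := by
    intro h
    have h2 : G.arcs.erase a = G.arcs := congrArg FDigraph.arcs h
    have : a ∈ G.arcs.erase a := by rw [h2]; exact ha
    exact Finset.notMem_erase a G.arcs this
  have hd : H.dichi ≤ k - 1 := hG.2 H hsub hne
  obtain ⟨φ, hφ0⟩ := H.exists_dicolouring_dichi
  have hφ : H.IsDicolouring (k-1) φ := hφ0.mono hd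
  have hnotG : ¬ G.IsDicolouring (k-1) φ := by
    intro h
    have h1 : G.dichi ≤ k - 1 := Nat.sInf_le ⟨φ, h⟩
    rw [hG.1] at h1
    omega
  have hverts : ∀ v ∈ G.verts, φ v < k - 1 := hφ.1
  have hex : ¬ ∀ c, G.AcyclicOn {v | φ v = c} := fun hc => hnotG ⟨hverts, hc⟩
  push_neg at hex
  obtain ⟨c, hcnot⟩ := hex
  unfold FDigraph.AcyclicOn at hcnot
  rw [not_not] at hcnot
  obtain ⟨l0, hl0cyc, hl0mono⟩ := hcnot
  have key : ∀ l', G.IsDicycle l' → (∀ v ∈ l', φ v = c) →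
      a ∈ l'.zip (l'.rotate 1) := by
    intro l' hc' hm'
    by_contra hna
    refine hφ.2 c ⟨l', ⟨hc'.1, hc'.2.1, fun p hp => ?_⟩, hm'⟩
    exact Finset.mem_erase.2 ⟨fun h => hna (h ▸ hp), hc'.2.2 p hp⟩
  have hSne : {m | ∃ l', G.IsDicycle l' ∧ (∀ v ∈ l', φ v = c) ∧
      l'.length = m}.Nonempty := ⟨l0.length, l0, hl0cyc, hl0mono, rfl⟩
  obtain ⟨l1, hl1cyc, hl1mono, hl1len⟩ := Nat.sInf_mem hSne
  have hmin : ∀ l', G.IsDicycle l' → (∀ v ∈ l', φ v = c) →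
      sInf {m | ∃ l', G.IsDicycle l' ∧ (∀ v ∈ l', φ v = c) ∧ l'.length = m}
        ≤ l'.length :=
    fun l' h1 h2 => Nat.sInf_le ⟨l', h1, h2, rfl⟩
  have hal1 : a ∈ l1.zip (l1.rotate 1) := key l1 hl1cyc hl1mono
  obtain ⟨s, hs, hsa⟩ := (mem_zip_iff l1 a).1 hal1
  have hcyc : G.IsDicycle (l1.rotate (s+1)) := hl1cyc.rotate (s+1)
  have hmono : ∀ v ∈ l1.rotate (s+1), φ v = c :=
    fun v hv => hl1mono v (List.mem_rotate.1 hv)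
  have hlenl : (l1.rotate (s+1)).length = l1.length := List.length_rotate _ _
  have hminl : ∀ l', G.IsDicycle l' → (∀ v ∈ l', φ v = c) →
      (l1.rotate (s+1)).length ≤ l'.length := by
    intro l' h1 h2
    rw [hlenl, hl1len]
    exact hmin l' h1 h2
  have hwrapa : a = ((l1.rotate (s+1))[(l1.rotate (s+1)).length - 1]'(by omega),
      (l1.rotate (s+1))[0]'(by omega)) := by
    rw [hsa]
    ext
    · simp only [List.getElem_rotate]
      refine getElem_idx_congr ?_ _
      rw [show (l1.rotate (s+1)).length - 1 + (s+1) = l1.length + s from by omega,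
        Nat.add_mod_left, Nat.mod_eq_of_lt hs]
    · simp only [List.getElem_rotate]
      exact getElem_idx_congr (by rw [Nat.zero_add]) _
  have hazip : a ∈ (l1.rotate (s+1)).zip ((l1.rotate (s+1)).rotate 1) :=
    zip_rotate_subset l1 (s+1) a hal1
  refine ⟨l1.rotate (s+1), hcyc, hazip, ?_⟩
  intro u hu v hv harc
  obtain ⟨iu, hiu, hiue⟩ := List.mem_iff_getElem.1 hu
  obtain ⟨iv, hiv, hive⟩ := List.mem_iff_getElem.1 hv
  by_cases hcase : iv = (iu + 1) % (l1.rotate (s+1)).length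
  · rw [mem_zip_iff]
    refine ⟨iu, hiu, ?_⟩
    ext
    · simp only; exact hiue.symm
    · simp only
      rw [← hive]
      exact getElem_idx_congr hcase _
  · exfalso
    have hchord : ((l1.rotate (s+1))[iu]'hiu, (l1.rotate (s+1))[iv]'hiv) ∈ G.arcs := by
      rw [hiue, hive]; exact harc
    have hneuv : iu ≠ iv := by
      intro h
      apply (G.wf _ harc).2.2
      rw [← hiue, ← hive]
      exact getElem_idx_congr h _
    rcases Nat.lt_or_ge iu iv with hlt | hge
    · have hiu1 : iu + 1 < (l1.rotate (s+1)).length := by omega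
      have hmod : (iu + 1) % (l1.rotate (s+1)).length = iu + 1 := Nat.mod_eq_of_lt hiu1
      have hne1 : iv ≠ iu + 1 := by rw [← hmod]; exact hcase
      have hij2 : iu + 2 ≤ iv := by omega
      obtain ⟨l', hc', hlen', hsub', hwz'⟩ :=
        FDigraph.shortcut hcyc hiu hij2 hiv hchord
      have := hminl l' hc' (fun w hw => hmono w (hsub' w hw))
      omega
    · have hji : iv < iu := by omega
      have hcorner : ¬ (iu = (l1.rotate (s+1)).length - 1 ∧ iv = 0) := by
        rintro ⟨h1, h2⟩
        apply hcase
        rw [h1, h2, show (l1.rotate (s+1)).length - 1 + 1 = (l1.rotate (s+1)).length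
          from by omega, Nat.mod_self]
      obtain ⟨l', hne', hnd', hsub', harcs'⟩ :=
        FDigraph.avoid hcyc hji hiu hchord hcorner
      refine hφ.2 c ⟨l', ⟨hne', hnd', fun p hp => ?_⟩,
        fun w hw => hmono w (hsub' w hw)⟩
      have hpq := harcs' p hp
      refine Finset.mem_erase.2 ⟨?_, hpq.1⟩
      intro hpa
      exact hpq.2 (hpa ▸ hwrapa)
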